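/- Let κ be regular uncountable and assume 2^{ℵ0} ≥ 2 and there is a family ⟨X_r : r ∈ ^λ2⟩ (λ < κ regular) of pairwise non-embeddable structures in a countable relational language, of size λ each, with the 'fullness' property that every element stands in relation with some other element. For A ≠ A' ⊆ ^λ2, the sets O_A and O_{A'} (unions over r ∈ A of the isomorphism-closures of the basic open sets of codes of X_r in the space of κ-sized structures) are distinct. Hence there are 2^{2^λ} many open, isomorphism-invariant subsets of the space of κ-sized L-structures with the bounded topology. -/

import Mathlib

open Cardinal Set

/-- The bounded topology on `Mod^κ_L ≅ ^{κ×κ}2`, generated by the sets determined by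
partial functions with domain of size `< κ`. -/
def modTopology (κ : Cardinal) : TopologicalSpace (κ.ord.ToType → κ.ord.ToType → Bool) :=
  TopologicalSpace.generateFrom
    {U | ∃ (d : Set (κ.ord.ToType × κ.ord.ToType)) (σ : κ.ord.ToType → κ.ord.ToType → Bool),
      Cardinal.mk ↥d < κ ∧ U = {x | ∀ p ∈ d, x p.1 p.2 = σ p.1 p.2}}

/-- Isomorphism of coded graph structures on `κ`, via a permutation of `κ`. -/
def modIso (κ : Cardinal) (x y : κ.ord.ToType → κ.ord.ToType → Bool) : Prop :=
  ∃ p : κ.ord.ToType ≃ κ.ord.ToType, ∀ a b : κ.ord.ToType, y (p a) (p b) = x a b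

lemma modIso_symm {κ : Cardinal} {x y} (h : modIso κ x y) : modIso κ y x := by
  obtain ⟨p, hp⟩ := h
  exact ⟨p.symm, fun a b => by rw [← hp, p.apply_symm_apply, p.apply_symm_apply]⟩

lemma modIso_trans {κ : Cardinal} {x y z} (h1 : modIso κ x y) (h2 : modIso κ y z) :
    modIso κ x z := by
  obtain ⟨p, hp⟩ := h1; obtain ⟨q, hq⟩ := h2
  exact ⟨p.trans q, fun a b => by simp [Equiv.trans_apply, hq, hp]⟩

theorem stmt_17 (κ ν : Cardinal) (hκreg : κ.IsRegular) (hκunc : ℵ₀ < κ)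
    (hνinf : ℵ₀ ≤ ν) (hνreg : ν.IsRegular) (hνκ : ν < κ)
    (X : (ν.ord.ToType → Bool) → ν.ord.ToType → ν.ord.ToType → Bool)
    (hfull : ∀ r a, ∃ b, X r a b = true ∨ X r b a = true)
    (hnonemb : ∀ r s, r ≠ s →
      ¬ ∃ f : ν.ord.ToType → ν.ord.ToType, Function.Injective f ∧
        ∀ a b, X s (f a) (f b) = X r a b)
    (e : ν.ord.ToType → κ.ord.ToType) (he : Function.Injective e) :
    (∀ A A' : Set (ν.ord.ToType → Bool), A ≠ A' →
      {y : κ.ord.ToType → κ.ord.ToType → Bool | ∃ r ∈ A,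
          ∃ x : κ.ord.ToType → κ.ord.ToType → Bool,
            (∀ a b : ν.ord.ToType, x (e a) (e b) = X r a b) ∧ modIso κ x y} ≠
      {y : κ.ord.ToType → κ.ord.ToType → Bool | ∃ r ∈ A',
          ∃ x : κ.ord.ToType → κ.ord.ToType → Bool,
            (∀ a b : ν.ord.ToType, x (e a) (e b) = X r a b) ∧ modIso κ x y}) ∧
    (∃ F : Set (Set (κ.ord.ToType → κ.ord.ToType → Bool)),
      Cardinal.mk ↥F = (2 : Cardinal) ^ ((2 : Cardinal) ^ ν) ∧
      ∀ U ∈ F, (modTopology κ).IsOpen U ∧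
        ∀ x y, modIso κ x y → (x ∈ U ↔ y ∈ U)) := by
  classical
  -- The map from sets of reals to sets of structures
  set O : Set (ν.ord.ToType → Bool) → Set (κ.ord.ToType → κ.ord.ToType → Bool) :=
    fun A => {y | ∃ r ∈ A, ∃ x : κ.ord.ToType → κ.ord.ToType → Bool,
      (∀ a b : ν.ord.ToType, x (e a) (e b) = X r a b) ∧ modIso κ x y} with hO
  -- The padded witness structures
  set pad : (ν.ord.ToType → Bool) → κ.ord.ToType → κ.ord.ToType → Bool :=
    fun r u v => if h : (∃ a, e a = u) ∧ (∃ b, e b = v)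
      then X r h.1.choose h.2.choose else false with hpad
  have pad_e : ∀ r a b, pad r (e a) (e b) = X r a b := by
    intro r a b
    have h : (∃ a', e a' = e a) ∧ (∃ b', e b' = e b) := ⟨⟨a, rfl⟩, ⟨b, rfl⟩⟩
    rw [hpad]
    simp only [dif_pos h]
    rw [he h.1.choose_spec, he h.2.choose_spec]
  have pad_true : ∀ r u v, pad r u v = true → (∃ a, e a = u) ∧ (∃ b, e b = v) := by
    intro r u v h
    by_contra hc
    rw [hpad] at h
    simp only [dif_neg hc] at h
    exact Bool.false_ne_true h
  -- Key: the padded witness detects membership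
  have key : ∀ (r : ν.ord.ToType → Bool) (A : Set (ν.ord.ToType → Bool)),
      pad r ∈ O A ↔ r ∈ A := by
    intro r A
    constructor
    · rintro ⟨s, hs, x, hx, p, hp⟩
      have hsr : s = r := by
        by_contra hne
        -- every p (e a) is in the range of e
        have hrange : ∀ a, ∃ a', e a' = p (e a) := by
          intro a
          obtain ⟨b, hb | hb⟩ := hfull s a
          · have ht : pad r (p (e a)) (p (e b)) = true := by rw [hp, hx, hb]
            exact (pad_true r _ _ ht).1
          · have ht : pad r (p (e b)) (p (e a)) = true := by rw [hp, hx, hb]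
            exact (pad_true r _ _ ht).2
        set f : ν.ord.ToType → ν.ord.ToType := fun a => (hrange a).choose with hf
        have hfe : ∀ a, e (f a) = p (e a) := fun a => (hrange a).choose_spec
        refine hnonemb s r hne ⟨f, ?_, ?_⟩
        · intro a b hab
          apply he
          apply p.injective
          rw [← hfe, ← hfe, hab]
        · intro a b
          rw [← pad_e r (f a) (f b), hfe, hfe, hp, hx]
      exact hsr ▸ hs
    · intro hr
      exact ⟨r, hr, pad r, pad_e r, Equiv.refl _, fun a b => rfl⟩
  have Oinj : Function.Injective O := by
    intro A A' h
    ext r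
    rw [← key r A, ← key r A', h]
  constructor
  · intro A A' hne h
    exact hne (Oinj h)
  · refine ⟨Set.range O, ?_, ?_⟩
    · rw [mk_range_eq _ Oinj, mk_set, mk_arrow]
      simp [mk_ord_toType]
    · rintro U ⟨A, rfl⟩
      constructor
      · -- openness
        letI : TopologicalSpace (κ.ord.ToType → κ.ord.ToType → Bool) := modTopology κ
        show IsOpen (O A)
        have hOA : O A = ⋃ r ∈ A, ⋃ p : κ.ord.ToType ≃ κ.ord.ToType,
            {y : κ.ord.ToType → κ.ord.ToType → Bool |
              ∀ a b : ν.ord.ToType, y (p (e a)) (p (e b)) = X r a b} := by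
          ext y
          simp only [hO, mem_setOf_eq, mem_iUnion]
          constructor
          · rintro ⟨r, hr, x, hx, p, hp⟩
            exact ⟨r, hr, p, fun a b => by rw [hp, hx]⟩
          · rintro ⟨r, hr, p, hp⟩
            exact ⟨r, hr, fun u v => y (p u) (p v), hp, p, fun a b => rfl⟩
        rw [hOA]
        refine isOpen_biUnion fun r _ => isOpen_iUnion fun p => ?_
        apply TopologicalSpace.isOpen_generateFrom_of_mem
        have hpe : Function.Injective (fun a => p (e a)) := p.injective.comp he
        refine ⟨Set.range (fun ab : ν.ord.ToType × ν.ord.ToType => (p (e ab.1), p (e ab.2))),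
          fun u v => if h : ∃ ab : ν.ord.ToType × ν.ord.ToType,
            p (e ab.1) = u ∧ p (e ab.2) = v then X r h.choose.1 h.choose.2 else false,
          ?_, ?_⟩
        · calc #(Set.range (fun ab : ν.ord.ToType × ν.ord.ToType => (p (e ab.1), p (e ab.2))))
              ≤ #(ν.ord.ToType × ν.ord.ToType) := mk_range_le
            _ = ν * ν := by simp [mk_prod, mk_ord_toType]
            _ = ν := mul_eq_self hνinf
            _ < κ := hνκ
        · have hσ : ∀ a b : ν.ord.ToType,
              (if h : ∃ ab : ν.ord.ToType × ν.ord.ToType,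
                p (e ab.1) = p (e a) ∧ p (e ab.2) = p (e b)
                then X r h.choose.1 h.choose.2 else false) = X r a b := by
            intro a b
            have h : ∃ ab : ν.ord.ToType × ν.ord.ToType,
                p (e ab.1) = p (e a) ∧ p (e ab.2) = p (e b) := ⟨(a, b), rfl, rfl⟩
            rw [dif_pos h]
            have h1 : h.choose.1 = a := hpe h.choose_spec.1
            have h2 : h.choose.2 = b := hpe h.choose_spec.2
            rw [h1, h2]
          ext y
          constructor
          · intro hy q hq
            obtain ⟨ab, rfl⟩ := hq
            calc y (p (e ab.1), p (e ab.2)).1 (p (e ab.1), p (e ab.2)).2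
                = X r ab.1 ab.2 := hy ab.1 ab.2
              _ = _ := (hσ ab.1 ab.2).symm
          · intro hy a b
            have h2 := hy (p (e a), p (e b)) ⟨(a, b), rfl⟩
            rw [← hσ a b]
            exact h2
      · -- iso-invariance
        intro x y hxy
        constructor
        · rintro ⟨r, hr, x', hx', hiso⟩
          exact ⟨r, hr, x', hx', modIso_trans hiso hxy⟩
        · rintro ⟨r, hr, x', hx', hiso⟩
          exact ⟨r, hr, x', hx', modIso_trans hiso (modIso_symm hxy)⟩
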